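/- Integral bounds and intermediate points in Lagrangian coordinates (Lemma 2.4). Let Y:[0,T]→[0,∞) be nondecreasing with Y(0)=0, and for 0≤t≤T and integer i ≥ [Y(t)]+1 set Ω_i(t)=[Y(t),[Y(t)]+2] if i=[Y(t)]+1 and Ω_i(t)=[i,i+1] if i≥[Y(t)]+2 ([·] is the integer part). Let v,θ be positive measurable functions on {(t,y):0≤t≤T, y>Y(t)}, let ṽ,θ̃ be functions with 0<c₁≤ṽ,θ̃≤c₂, and assume the energy bound sup_{0≤s≤T} ∫_{Y(s)}^{∞} [Φ(v(s,y)/ṽ(y)) + Φ(θ(s,y)/θ̃(y))] dy ≤ E₀ for some E₀>0. Then there exists a constant C₀>0, depending only on c₁, c₂ and E₀, such that for every pair (s,t) with 0≤s≤t≤T and every integer i ≥ [Y(t)]+1: C₀^{−1} ≤ ∫_{Ω_i(t)} v(s,y) dy and ∫_{Ω_i(t)} θ(s,y) dy ≤ C₀, as well as C₀^{−1} ≤ ∫_{Ω_i(t)} θ(s,y) dy and ∫_{Ω_i(t)} v(s,y) dy ≤ C₀; moreover, if v(s,·) and θ(s,·) are continuous, there exist points a_i(s,t), b_i(s,t) ∈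 Ω_i(t) with C₀^{−1} ≤ v(s,a_i(s,t)) ≤ C₀ and C₀^{−1} ≤ θ(s,b_i(s,t)) ≤ C₀. -/

import Mathlib

open MeasureTheory Set Filter

lemma log_le_half {z : ℝ} (hz : 0 < z) : Real.log z ≤ z / 2 := by
  have h1 := Real.log_le_sub_one_of_pos (Real.sqrt_pos.2 hz)
  have h2 : Real.log (Real.sqrt z) = Real.log z / 2 := Real.log_sqrt hz.le
  nlinarith [Real.sq_sqrt hz.le, Real.sqrt_nonneg z, sq_nonneg (Real.sqrt z - 2)]

lemma aux_pt (c₁ c₂ E₀ w wS : ℝ) (hc₁ : 0 < c₁) (hl : c₁ ≤ wS) (hu : wS ≤ c₂)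
    (hw : 0 < w) (hE₀ : 0 < E₀) :
    0 ≤ w/wS - Real.log (w/wS) - 1 ∧
    w ≤ 2*c₂*(w/wS - Real.log (w/wS) - 1) + 2*c₂ ∧
    (w ≤ c₁*Real.exp (-(2*E₀+2)) → 2*E₀+1 ≤ w/wS - Real.log (w/wS) - 1) := by
  have hwS : 0 < wS := hc₁.trans_le hl
  set z := w / wS with hzdef
  have hz : 0 < z := div_pos hw hwS
  have hzw : w = z * wS := by rw [hzdef, div_mul_cancel₀ w hwS.ne']
  refine ⟨?_, ?_, ?_⟩
  · have := Real.log_le_sub_one_of_pos hz; linarith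
  · have hlog := log_le_half hz
    nlinarith [mul_nonneg hz.le (sub_nonneg.2 hu), hwS.le]
  · intro hwe
    have hE : (0:ℝ) < Real.exp (-(2*E₀+2)) := Real.exp_pos _
    have hzle : z ≤ Real.exp (-(2*E₀+2)) := by
      rw [hzdef, div_le_iff₀ hwS]
      nlinarith
    have hlog : Real.log z ≤ -(2*E₀+2) := by
      calc Real.log z ≤ Real.log (Real.exp (-(2*E₀+2))) := Real.log_le_log hz hzle
        _ = -(2*E₀+2) := Real.log_exp _
    linarith

lemma key_int (c₂ E₀ δ : ℝ) (hc₂ : 0 ≤ c₂) (hE₀ : 0 < E₀) (hδ : 0 < δ)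
    (p q : ℝ) (h1 : 1 ≤ q - p) (h2 : q - p ≤ 2)
    (g F : ℝ → ℝ) (hg : Measurable g)
    (hgint : IntegrableOn g (Icc p q))
    (hFint : IntegrableOn F (Icc p q))
    (hFbd : (∫ y in Icc p q, F y) ≤ E₀)
    (hae : ∀ᵐ y ∂(volume.restrict (Icc p q)),
      0 ≤ F y ∧ 0 < g y ∧ g y ≤ 2*c₂*F y + 2*c₂ ∧ (g y ≤ δ → 2*E₀+1 ≤ F y)) :
    δ/2 ≤ (∫ y in Icc p q, g y) ∧ (∫ y in Icc p q, g y) ≤ 2*c₂*E₀ + 4*c₂ := by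
  have hpq : p ≤ q := by linarith
  have hμI : volume (Icc p q) = ENNReal.ofReal (q - p) := Real.volume_Icc
  have hμIne : volume (Icc p q) ≠ ⊤ := by rw [hμI]; exact ENNReal.ofReal_ne_top
  have hμIreal : (volume (Icc p q)).toReal = q - p := by
    rw [hμI, ENNReal.toReal_ofReal]; linarith
  have hFnn : (0:ℝ → ℝ) ≤ᵐ[volume.restrict (Icc p q)] F := hae.mono fun y hy => hy.1
  constructor
  · -- lower bound
    set B := Icc p q ∩ {y | g y ≤ δ} with hBdef
    have hBmeas : MeasurableSet B := measurableSet_Icc.inter (hg measurableSet_Iic)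
    have hBsub : B ⊆ Icc p q := inter_subset_left
    have hBne : volume B ≠ ⊤ := by
      exact ne_top_of_le_ne_top hμIne (measure_mono hBsub)
    have haeB : ∀ᵐ y ∂(volume.restrict B), 2*E₀+1 ≤ F y := by
      have h1' := (ae_restrict_iff' measurableSet_Icc).1 hae
      rw [ae_restrict_iff' hBmeas]
      filter_upwards [h1'] with y hy hyB
      exact (hy hyB.1).2.2.2 hyB.2
    have hFB : (2*E₀+1) * (volume B).toReal ≤ ∫ y in B, F y := by
      have : (∫ _ in B, (2*E₀+1)) ≤ ∫ y in B, F y := by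
        apply integral_mono_ae (integrableOn_const (C := 2*E₀+1) hBne)
          (hFint.mono_set hBsub) haeB
      rwa [setIntegral_const, smul_eq_mul, mul_comm] at this
    have hFB2 : (∫ y in B, F y) ≤ ∫ y in Icc p q, F y :=
      setIntegral_mono_set hFint hFnn (HasSubset.Subset.eventuallyLE hBsub)
    have hμB : (volume B).toReal ≤ 1/2 := by
      have h0 : 0 ≤ (volume B).toReal := ENNReal.toReal_nonneg
      nlinarith
    set A := Icc p q \ B with hAdef
    have hAsub : A ⊆ Icc p q := diff_subset
    have hAmeas : MeasurableSet A := measurableSet_Icc.diff hBmeas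
    have hμA : 1/2 ≤ (volume A).toReal := by
      have : volume A = volume (Icc p q) - volume B :=
        measure_diff hBsub hBmeas.nullMeasurableSet hBne
      rw [this, ENNReal.toReal_sub_of_le (measure_mono hBsub) hμIne, hμIreal]
      linarith
    have haeA : ∀ᵐ y ∂(volume.restrict A), δ ≤ g y := by
      rw [ae_restrict_iff' hAmeas]
      refine ae_of_all _ fun y hy => ?_
      have : ¬ g y ≤ δ := fun h => hy.2 ⟨hy.1, h⟩
      linarith [not_le.1 this]
    have hgA : δ * (volume A).toReal ≤ ∫ y in A, g y := by
      have hAne : volume A ≠ ⊤ := ne_top_of_le_ne_top hμIne (measure_mono hAsub)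
      have : (∫ _ in A, δ) ≤ ∫ y in A, g y :=
        integral_mono_ae (integrableOn_const hAne)
          (hgint.mono_set hAsub) haeA
      rwa [setIntegral_const, smul_eq_mul, mul_comm] at this
    have hgnn : (0:ℝ → ℝ) ≤ᵐ[volume.restrict (Icc p q)] g := hae.mono fun y hy => hy.2.1.le
    have hgA2 : (∫ y in A, g y) ≤ ∫ y in Icc p q, g y :=
      setIntegral_mono_set hgint hgnn (HasSubset.Subset.eventuallyLE hAsub)
    nlinarith
  · -- upper bound
    have hRHS : IntegrableOn (fun y => 2*c₂*F y + 2*c₂) (Icc p q) :=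
      (hFint.const_mul (2*c₂)).add (integrableOn_const hμIne)
    have h1' : (∫ y in Icc p q, g y) ≤ ∫ y in Icc p q, (2*c₂*F y + 2*c₂) :=
      integral_mono_ae hgint hRHS (hae.mono fun y hy => hy.2.2.1)
    have h2' : (∫ y in Icc p q, (2*c₂*F y + 2*c₂))
        = 2*c₂*(∫ y in Icc p q, F y) + 2*c₂*(q-p) := by
      rw [integral_add (hFint.const_mul (2*c₂)) (integrableOn_const hμIne),
        MeasureTheory.integral_const_mul, setIntegral_const, smul_eq_mul, measureReal_def, hμIreal, mul_comm (q-p)]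
    nlinarith [mul_le_mul_of_nonneg_left hFbd (by linarith : (0:ℝ) ≤ 2*c₂)]

lemma key_pt (p q U m : ℝ) (h1 : 1 ≤ q - p) (h2 : q - p ≤ 2) (hm : 0 < m)
    (g : ℝ → ℝ) (hgint : IntegrableOn g (Icc p q))
    (hcont : ContinuousOn g (Icc p q))
    (hlow : m ≤ ∫ y in Icc p q, g y) (hup : (∫ y in Icc p q, g y) ≤ U) :
    ∃ a ∈ Icc p q, m/4 ≤ g a ∧ g a ≤ 2*U := by
  have hpq : p ≤ q := by linarith
  have hU : 0 < U := lt_of_lt_of_le hm (hlow.trans hup)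
  have hμI : volume (Icc p q) ≠ ⊤ := by rw [Real.volume_Icc]; exact ENNReal.ofReal_ne_top
  have hμIreal : (volume (Icc p q)).toReal = q - p := by
    rw [Real.volume_Icc, ENNReal.toReal_ofReal]; linarith
  have hconst : ∀ c : ℝ, (∫ _ in Icc p q, c) = c * (q - p) := by
    intro c; rw [setIntegral_const, smul_eq_mul, measureReal_def, hμIreal, mul_comm]
  have ha0 : ∃ a ∈ Icc p q, m/4 ≤ g a := by
    by_contra h
    push_neg at h
    have : (∫ y in Icc p q, g y) ≤ ∫ _ in Icc p q, m/4 :=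
      setIntegral_mono_on hgint (integrableOn_const hμI)
        measurableSet_Icc (fun y hy => (h y hy).le)
    rw [hconst] at this
    nlinarith
  have ha1 : ∃ a ∈ Icc p q, g a ≤ 2*U := by
    by_contra h
    push_neg at h
    have : (∫ _ in Icc p q, 2*U) ≤ ∫ y in Icc p q, g y :=
      setIntegral_mono_on (integrableOn_const hμI) hgint
        measurableSet_Icc (fun y hy => (h y hy).le)
    rw [hconst] at this
    nlinarith
  obtain ⟨a₀, ha₀I, ha₀⟩ := ha0
  obtain ⟨a₁, ha₁I, ha₁⟩ := ha1
  have hmU : m/4 ≤ 2*U := by nlinarith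
  by_cases hcase : g a₀ ≤ 2*U
  · exact ⟨a₀, ha₀I, ha₀, hcase⟩
  · push_neg at hcase
    rcases le_total a₀ a₁ with hle | hle
    · have hsub : Icc a₀ a₁ ⊆ Icc p q := Icc_subset_Icc ha₀I.1 ha₁I.2
      have := intermediate_value_Icc' hle (hcont.mono hsub)
      have hmem : (2*U) ∈ Icc (g a₁) (g a₀) := ⟨ha₁, hcase.le⟩
      obtain ⟨c, hcI, hc⟩ := this hmem
      exact ⟨c, hsub hcI, by rw [hc]; exact hmU, hc.le⟩
    · have hsub : Icc a₁ a₀ ⊆ Icc p q := Icc_subset_Icc ha₁I.1 ha₀I.2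
      have := intermediate_value_Icc hle (hcont.mono hsub)
      have hmem : (2*U) ∈ Icc (g a₁) (g a₀) := ⟨ha₁, hcase.le⟩
      obtain ⟨c, hcI, hc⟩ := this hmem
      exact ⟨c, hsub hcI, by rw [hc]; exact hmU, hc.le⟩


/-- Integral bounds and intermediate points in Lagrangian coordinates (Lemma 2.4). -/
theorem stmt_5 (c₁ c₂ E₀ : ℝ) (hc₁ : 0 < c₁) (hc₁₂ : c₁ ≤ c₂) (hE₀ : 0 < E₀) :
    ∃ C₀ : ℝ, 0 < C₀ ∧
      ∀ (T : ℝ) (Y : ℝ → ℝ) (v θ : ℝ → ℝ → ℝ) (vS θS : ℝ → ℝ),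
        0 ≤ T →
        MonotoneOn Y (Set.Icc 0 T) → Y 0 = 0 → (∀ t ∈ Set.Icc (0:ℝ) T, 0 ≤ Y t) →
        -- v and θ are positive and measurable on the domain {(t,y) : 0 ≤ t ≤ T, y > Y(t)}
        (∀ t ∈ Set.Icc (0:ℝ) T, ∀ y, Y t < y → 0 < v t y ∧ 0 < θ t y) →
        (∀ t ∈ Set.Icc (0:ℝ) T, Measurable (v t) ∧ Measurable (θ t)) →
        -- local integrability
        (∀ s ∈ Set.Icc (0:ℝ) T, ∀ a b : ℝ,
          IntegrableOn (v s) (Set.Icc a b) ∧ IntegrableOn (θ s) (Set.Icc a b)) →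
        -- bounds on the reference profiles
        (∀ y : ℝ, c₁ ≤ vS y ∧ vS y ≤ c₂ ∧ c₁ ≤ θS y ∧ θS y ≤ c₂) →
        -- the energy bound
        (∀ s ∈ Set.Icc (0:ℝ) T,
          IntegrableOn (fun y => (v s y / vS y - Real.log (v s y / vS y) - 1)
            + (θ s y / θS y - Real.log (θ s y / θS y) - 1)) (Set.Ioi (Y s))) →
        (∀ s ∈ Set.Icc (0:ℝ) T,
          (∫ y in Set.Ioi (Y s), ((v s y / vS y - Real.log (v s y / vS y) - 1)
            + (θ s y / θS y - Real.log (θ s y / θS y) - 1))) ≤ E₀) →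
        -- conclusion
        ∀ s t : ℝ, 0 ≤ s → s ≤ t → t ≤ T →
          ∀ i : ℤ, ⌊Y t⌋ + 1 ≤ i →
            ∀ Ω : Set ℝ,
              Ω = (if i = ⌊Y t⌋ + 1 then Set.Icc (Y t) ((⌊Y t⌋ : ℝ) + 2)
                    else Set.Icc (i : ℝ) ((i : ℝ) + 1)) →
              (C₀⁻¹ ≤ ∫ y in Ω, v s y) ∧ (∫ y in Ω, v s y) ≤ C₀ ∧
              (C₀⁻¹ ≤ ∫ y in Ω, θ s y) ∧ (∫ y in Ω, θ s y) ≤ C₀ ∧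
              (ContinuousOn (v s) Ω → ∃ a ∈ Ω, C₀⁻¹ ≤ v s a ∧ v s a ≤ C₀) ∧
              (ContinuousOn (θ s) Ω → ∃ b ∈ Ω, C₀⁻¹ ≤ θ s b ∧ θ s b ≤ C₀) := by
  have hc₂ : (0:ℝ) < c₂ := lt_of_lt_of_le hc₁ hc₁₂
  set δ : ℝ := c₁ * Real.exp (-(2*E₀+2)) with hδdef
  have hδ : 0 < δ := mul_pos hc₁ (Real.exp_pos _)
  set U : ℝ := 2*c₂*E₀ + 4*c₂ with hUdef
  have hU : 0 < U := by positivity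
  set C₀ : ℝ := max (2*U) (8/δ) with hC₀def
  have hC₀ : 0 < C₀ := lt_of_lt_of_le (by linarith) (le_max_left _ _)
  have hC₀inv : C₀⁻¹ ≤ δ/8 := by
    have h8 : 0 < 8/δ := by positivity
    calc C₀⁻¹ ≤ (8/δ)⁻¹ := inv_anti₀ h8 (le_max_right _ _)
      _ = δ/8 := by field_simp
  have h2U : 2*U ≤ C₀ := le_max_left _ _
  refine ⟨C₀, hC₀, ?_⟩
  intro T Y v θ vS θS hT hmono hY0 hYnn hpos hmeas hloc hbS hFint hFbd s t hs hst htT i hi Ω hΩ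
  have hsIcc : s ∈ Icc (0:ℝ) T := ⟨hs, hst.trans htT⟩
  have htIcc : t ∈ Icc (0:ℝ) T := ⟨hs.trans hst, htT⟩
  have hYst : Y s ≤ Y t := hmono hsIcc htIcc hst
  -- extract p, q
  obtain ⟨p, q, hΩpq, h1, h2, hpYs⟩ :
      ∃ p q : ℝ, Ω = Icc p q ∧ 1 ≤ q - p ∧ q - p ≤ 2 ∧ Y s ≤ p := by
    split_ifs at hΩ with hcase
    · refine ⟨Y t, (⌊Y t⌋ : ℝ) + 2, hΩ, ?_, ?_, hYst⟩
      · have := Int.lt_floor_add_one (Y t); linarith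
      · have := Int.floor_le (Y t); linarith
    · have hi2 : (⌊Y t⌋:ℤ) + 2 ≤ i := by omega
      have hi2' : ((⌊Y t⌋:ℝ)) + 2 ≤ (i:ℝ) := by exact_mod_cast hi2
      refine ⟨(i:ℝ), (i:ℝ) + 1, hΩ, by linarith, by linarith, ?_⟩
      have := Int.lt_floor_add_one (Y t); linarith
  subst hΩpq
  set F : ℝ → ℝ := fun y => (v s y / vS y - Real.log (v s y / vS y) - 1)
      + (θ s y / θS y - Real.log (θ s y / θS y) - 1) with hFdef
  have hFI : IntegrableOn F (Ioi (Y s)) := hFint s hsIcc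
  -- pointwise facts for y > Y s
  have hptv : ∀ y, Y s < y →
      0 ≤ F y ∧ 0 < v s y ∧ v s y ≤ 2*c₂*F y + 2*c₂ ∧ (v s y ≤ δ → 2*E₀+1 ≤ F y) := by
    intro y hy
    obtain ⟨hv, hθ⟩ := hpos s hsIcc y hy
    obtain ⟨hv1, hv2, hθ1, hθ2⟩ := hbS y
    obtain ⟨hA1, hA2, hA3⟩ := aux_pt c₁ c₂ E₀ (v s y) (vS y) hc₁ hv1 hv2 hv hE₀
    obtain ⟨hB1, hB2, hB3⟩ := aux_pt c₁ c₂ E₀ (θ s y) (θS y) hc₁ hθ1 hθ2 hθ hE₀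
    refine ⟨by simp only [hFdef]; linarith, hv, ?_, fun h => ?_⟩
    · simp only [hFdef]; nlinarith
    · have := hA3 h; simp only [hFdef]; linarith
  have hptθ : ∀ y, Y s < y →
      0 ≤ F y ∧ 0 < θ s y ∧ θ s y ≤ 2*c₂*F y + 2*c₂ ∧ (θ s y ≤ δ → 2*E₀+1 ≤ F y) := by
    intro y hy
    obtain ⟨hv, hθ⟩ := hpos s hsIcc y hy
    obtain ⟨hv1, hv2, hθ1, hθ2⟩ := hbS y
    obtain ⟨hA1, hA2, hA3⟩ := aux_pt c₁ c₂ E₀ (v s y) (vS y) hc₁ hv1 hv2 hv hE₀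
    obtain ⟨hB1, hB2, hB3⟩ := aux_pt c₁ c₂ E₀ (θ s y) (θS y) hc₁ hθ1 hθ2 hθ hE₀
    refine ⟨by simp only [hFdef]; linarith, hθ, ?_, fun h => ?_⟩
    · simp only [hFdef]; nlinarith
    · have := hB3 h; simp only [hFdef]; linarith
  -- a.e. on Icc p q, Y s < y
  have haeY : ∀ᵐ y ∂(volume.restrict (Icc p q)), Y s < y := by
    rw [ae_iff]
    have hset : {y : ℝ | ¬ Y s < y} = Iic (Y s) := by ext y; simp [not_lt]
    rw [hset, Measure.restrict_apply measurableSet_Iic]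
    refine measure_mono_null (fun y hy => ?_) (measure_singleton p)
    have : y = p := le_antisymm (hy.1.trans hpYs) hy.2.1
    simp [this]
  -- integrability and integral bound on Icc p q for F
  have hsubIci : Icc p q ⊆ Ici (Y s) := fun y hy => le_trans hpYs hy.1
  have hFIcc : IntegrableOn F (Icc p q) := by
    have : IntegrableOn F (Ici (Y s)) := by
      rwa [integrableOn_Ici_iff_integrableOn_Ioi]
    exact this.mono_set hsubIci
  have hFnnIoi : (0:ℝ → ℝ) ≤ᵐ[volume.restrict (Ioi (Y s))] F := by
    rw [EventuallyLE, ae_restrict_iff' measurableSet_Ioi]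
    exact ae_of_all _ fun y hy => (hptv y hy).1
  have hsubae : Icc p q ≤ᵐ[volume] Ioi (Y s) := by
    rw [ae_le_set]
    refine measure_mono_null (fun y hy => ?_) (measure_singleton p)
    have : y = p := le_antisymm ((not_lt.1 hy.2).trans hpYs) hy.1.1
    simp [this]
  have hFbdIcc : (∫ y in Icc p q, F y) ≤ E₀ :=
    le_trans (setIntegral_mono_set hFI hFnnIoi hsubae) (hFbd s hsIcc)
  -- apply the key lemmas
  obtain ⟨hvmeas, hθmeas⟩ := hmeas s hsIcc
  obtain ⟨hvint, hθint⟩ := hloc s hsIcc p q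
  have haev : ∀ᵐ y ∂(volume.restrict (Icc p q)),
      0 ≤ F y ∧ 0 < v s y ∧ v s y ≤ 2*c₂*F y + 2*c₂ ∧ (v s y ≤ δ → 2*E₀+1 ≤ F y) :=
    haeY.mono fun y hy => hptv y hy
  have haeθ : ∀ᵐ y ∂(volume.restrict (Icc p q)),
      0 ≤ F y ∧ 0 < θ s y ∧ θ s y ≤ 2*c₂*F y + 2*c₂ ∧ (θ s y ≤ δ → 2*E₀+1 ≤ F y) :=
    haeY.mono fun y hy => hptθ y hy
  obtain ⟨hvlow, hvup⟩ := key_int c₂ E₀ δ hc₂.le hE₀ hδ p q h1 h2 (v s) F hvmeas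
    hvint hFIcc hFbdIcc haev
  obtain ⟨hθlow, hθup⟩ := key_int c₂ E₀ δ hc₂.le hE₀ hδ p q h1 h2 (θ s) F hθmeas
    hθint hFIcc hFbdIcc haeθ
  have hδ2 : 0 < δ/2 := by linarith
  have hClow : C₀⁻¹ ≤ δ/2 := hC₀inv.trans (by linarith)
  have hCup : U ≤ C₀ := le_trans (by linarith) h2U
  refine ⟨hClow.trans hvlow, hvup.trans hCup, hClow.trans hθlow, hθup.trans hCup, ?_, ?_⟩
  · intro hcont
    obtain ⟨a, haI, ha1, ha2⟩ := key_pt p q U (δ/2) h1 h2 hδ2 (v s) hvint hcont hvlow hvup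
    exact ⟨a, haI, le_trans (by linarith [hC₀inv]) ha1, ha2.trans h2U⟩
  · intro hcont
    obtain ⟨b, hbI, hb1, hb2⟩ := key_pt p q U (δ/2) h1 h2 hδ2 (θ s) hθint hcont hθlow hθup
    exact ⟨b, hbI, le_trans (by linarith [hC₀inv]) hb1, hb2.trans h2U⟩
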